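/- Let A = αℤ be the one-point compactification of the discrete integers and f(z) = z+1, f(∞) = ∞. The topological algebra 𝐀 = (A, {f, f⁻¹}) with the two continuous unary operations f and f⁻¹ has the property that its only closed congruences are the diagonal Δ_A and A × A; hence 𝐀 is an infinite, totally disconnected, simple compact Hausdorff topological algebra. -/

import Mathlib

open OnePoint

/-- Let `A = αℤ` be the one-point compactification of the discrete integers, and let `f`
(resp. `g`) be the homeomorphism extending `z ↦ z + 1` (resp. its inverse `z ↦ z - 1`),
fixing `∞`. The topological algebra `(A, {f, g})` has no closed congruences other than
the diagonal and `A × A`; hence it is an infinite, totally disconnected, simple compact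
Hausdorff topological algebra. -/
theorem statement19 (f g : OnePoint ℤ → OnePoint ℤ)
    (hfi : f ∞ = ∞) (hfz : ∀ z : ℤ, f (z : OnePoint ℤ) = ((z + 1 : ℤ) : OnePoint ℤ))
    (hgi : g ∞ = ∞) (hgz : ∀ z : ℤ, g (z : OnePoint ℤ) = ((z - 1 : ℤ) : OnePoint ℤ)) :
    (∀ θ : OnePoint ℤ → OnePoint ℤ → Prop, Equivalence θ →
        IsClosed {p : OnePoint ℤ × OnePoint ℤ | θ p.1 p.2} →
        (∀ x y, θ x y → θ (f x) (f y)) → (∀ x y, θ x y → θ (g x) (g y)) →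
        (∀ x y, θ x y ↔ x = y) ∨ (∀ x y, θ x y)) ∧
      Infinite (OnePoint ℤ) ∧ TotallyDisconnectedSpace (OnePoint ℤ) ∧
      CompactSpace (OnePoint ℤ) ∧ T2Space (OnePoint ℤ) := by
  refine ⟨?_, inferInstanceAs (Infinite (Option ℤ)), inferInstance, inferInstance,
    inferInstance⟩
  intro θ hEq hCl hf hg
  by_cases hdiag : ∀ x y, θ x y ↔ x = y
  · exact Or.inl hdiag
  right
  -- shifting lemma
  have shift : ∀ n : ℤ, ∀ a b : ℤ, θ a b → θ (a + n) (b + n) := by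
    intro n
    induction n using Int.induction_on with
    | zero => simpa using fun a b h => h
    | succ k ih =>
      intro a b h
      have h2 := hf _ _ (ih a b h)
      rw [hfz, hfz] at h2
      have e1 : a + (k : ℤ) + 1 = a + ((k : ℤ) + 1) := by ring
      have e2 : b + (k : ℤ) + 1 = b + ((k : ℤ) + 1) := by ring
      rwa [e1, e2] at h2
    | pred k ih =>
      intro a b h
      have h2 := hg _ _ (ih a b h)
      rw [hgz, hgz] at h2
      have e1 : a + -(k : ℤ) - 1 = a + (-(k : ℤ) - 1) := by ring
      have e2 : b + -(k : ℤ) - 1 = b + (-(k : ℤ) - 1) := by ring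
      rwa [e1, e2] at h2
  have shiftInf : ∀ n : ℤ, ∀ a : ℤ, θ a ∞ → θ (a + n) ∞ := by
    intro n
    induction n using Int.induction_on with
    | zero => simpa using fun a h => h
    | succ k ih =>
      intro a h
      have h2 := hf _ _ (ih a h)
      rw [hfz, hfi] at h2
      have e1 : a + (k : ℤ) + 1 = a + ((k : ℤ) + 1) := by ring
      rwa [e1] at h2
    | pred k ih =>
      intro a h
      have h2 := hg _ _ (ih a h)
      rw [hgz, hgi] at h2
      have e1 : a + -(k : ℤ) - 1 = a + (-(k : ℤ) - 1) := by ring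
      rwa [e1] at h2
  -- if some integer is related to ∞, everything collapses
  have allInf : (∃ a : ℤ, θ a ∞) → ∀ x y, θ x y := by
    rintro ⟨a, ha⟩
    have hz : ∀ z : ℤ, θ z ∞ := by
      intro z
      have := shiftInf (z - a) a ha
      simpa using this
    have hx : ∀ x : OnePoint ℤ, θ x ∞ := by
      intro x
      cases x with
      | infty => exact hEq.refl ∞
      | coe z => exact hz z
    intro x y
    exact hEq.trans (hx x) (hEq.symm (hx y))
  -- get a nontrivial pair
  push_neg at hdiag
  obtain ⟨x, y, hxy⟩ := hdiag
  rcases hxy with ⟨hθxy, hxney⟩ | ⟨h1, h2⟩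
  swap
  · exact absurd (h2 ▸ hEq.refl x) h1
  apply allInf
  -- case analysis
  cases x with
  | infty =>
    cases y with
    | infty => exact absurd rfl hxney
    | coe b => exact ⟨b, hEq.symm hθxy⟩
  | coe a =>
    cases y with
    | infty => exact ⟨a, hθxy⟩
    | coe b =>
      -- distinct integers related: propagate and take a limit to ∞
      have hd : b - a ≠ 0 := sub_ne_zero.mpr fun h => hxney (by rw [h])
      set d := b - a with hdd
      have hstep : ∀ k : ℕ, θ (a : OnePoint ℤ) ((a + k * d : ℤ) : OnePoint ℤ) := by
        intro k
        induction k with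
        | zero => simpa using hEq.refl (a : OnePoint ℤ)
        | succ n ih =>
          have h2 := shift ((n : ℤ) * d) a b hθxy
          have e : b + (n : ℤ) * d = a + ((n + 1 : ℕ) : ℤ) * d := by push_cast [hdd]; ring
          rw [e] at h2
          exact hEq.trans ih h2
      -- the sequence (a + k*d) tends to ∞
      have hinj : Function.Injective (fun k : ℕ => a + (k : ℤ) * d) := by
        intro i j h
        simp only at h
        have : (i : ℤ) = j := by
          have := mul_right_cancel₀ hd (by linarith : (i : ℤ) * d = (j : ℤ) * d)
          exact this
        exact_mod_cast this
      have htend : Filter.Tendsto (fun k : ℕ => ((a + k * d : ℤ) : OnePoint ℤ))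
          Filter.atTop (nhds (∞ : OnePoint ℤ)) := by
        have h1 : Filter.Tendsto (fun k : ℕ => (a + (k : ℤ) * d)) Filter.atTop
            (Filter.cocompact ℤ) := by
          rw [Filter.cocompact_eq_cofinite, ← Nat.cofinite_eq_atTop]
          exact hinj.tendsto_cofinite
        exact (OnePoint.tendsto_coe_infty.mono_left Filter.cocompact_le_coclosedCompact).comp h1
      have hmem : ((a : OnePoint ℤ), (∞ : OnePoint ℤ)) ∈
          {p : OnePoint ℤ × OnePoint ℤ | θ p.1 p.2} :=
        hCl.mem_of_tendsto ((tendsto_const_nhds.prodMk_nhds htend))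
          (Filter.Eventually.of_forall fun k => hstep k)
      exact ⟨a, hmem⟩
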